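/- Equivalence of LTL₃ with the original non-inductive definition: for every LTL formula φ and every finite trace t, t ∈ ⟦φ⟧₃ T iff all infinite extensions tu (u ∈ Σ^ω) satisfy tu ∈ ⟦φ⟧ T, and t ∈ ⟦φ⟧₃ F iff all infinite extensions tu satisfy tu ∈ ⟦φ⟧ F. -/

import Mathlib

/-- A trace is a finite list of states or an infinite stream of states. -/
def Trace (σ : Type) := List σ ⊕ (ℕ → σ)

namespace Trace

variable {σ : Type}

/-- Concatenation of traces; if the first is infinite, the result is the first. -/
def app : Trace σ → Trace σ → Trace σ
  | Sum.inl l, Sum.inl l' => Sum.inl (l ++ l')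
  | Sum.inl l, Sum.inr s =>
      Sum.inr (fun n => if h : n < l.length then l.get ⟨n, h⟩ else s (n - l.length))
  | Sum.inr s, _ => Sum.inr s

instance : Append (Trace σ) := ⟨app⟩

/-- The empty trace ε. -/
def eps : Trace σ := Sum.inl []

/-- A trace is infinite iff it is a stream. -/
def Inf (t : Trace σ) : Prop := t.isRight

/-- Drop the first state of a trace. -/
def drop1 : Trace σ → Trace σ
  | Sum.inl [] => Sum.inl []
  | Sum.inl (_ :: l) => Sum.inl l
  | Sum.inr s => Sum.inr (fun n => s (n + 1))

/-- Drop the first `n` states of a trace. -/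
def drop (t : Trace σ) (n : ℕ) : Trace σ := drop1^[n] t

/-- The first state of a trace, if any. -/
def head? : Trace σ → Option σ
  | Sum.inl [] => none
  | Sum.inl (a :: _) => some a
  | Sum.inr s => some (s 0)

/-- The set of prefixes of a trace. -/
def pre (t : Trace σ) : Set (Trace σ) := {u | ∃ v, t = u ++ v}

/-- The set of prefixes of traces in a set: ↓X. -/
def preS (X : Set (Trace σ)) : Set (Trace σ) := ⋃ t ∈ X, pre t

/-- The set of extensions of a trace: ↑t. -/
def ext (t : Trace σ) : Set (Trace σ) := {u | ∃ v, u = t ++ v}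

/-- The definitive prefixes of a set of traces: ↯X. -/
def dp (X : Set (Trace σ)) : Set (Trace σ) := {t | ext t ⊆ preS X}

/-- A set of traces is definitive iff it equals its own set of definitive prefixes. -/
def Definitive (X : Set (Trace σ)) : Prop := X = dp X

/-- Definitive union ⩁ of a collection of trace sets. -/
def dUnionS (S : Set (Set (Trace σ))) : Set (Trace σ) := dp (⋃₀ S)

/-- Binary / indexed definitive union. -/
def dUnion (X Y : Set (Trace σ)) : Set (Trace σ) := dp (X ∪ Y)

def dUnionI {ι : Sort*} (X : ι → Set (Trace σ)) : Set (Trace σ) := dp (⋃ i, X i)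

/-- The prepend operation ▷X. -/
def prepend (X : Set (Trace σ)) : Set (Trace σ) := {t | t.drop 1 ∈ X}

/-- Σ^ω, the set of infinite traces. -/
def omegaSet (σ : Type) : Set (Trace σ) := {t | t.Inf}

/-- The first state of a trace, with the empty state as default. -/
def st0 {A : Type} (t : Trace (Set A)) : Set A := (t.head?).getD ∅

end Trace

/-- Syntax of LTL formulae over atomic propositions `A`. -/
inductive LTL (A : Type) where
  | top : LTL A
  | atom : A → LTL A
  | neg : LTL A → LTL A
  | and : LTL A → LTL A → LTL A
  | next : LTL A → LTL A
  | until_ : LTL A → LTL A → LTL A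

namespace LTL

variable {A : Type}

open Trace

/-- Conventional LTL satisfaction on (infinite) traces. -/
def Sat : Trace (Set A) → LTL A → Prop
  | t, .top => True
  | t, .atom a => a ∈ t.st0
  | t, .neg φ => ¬ Sat t φ
  | t, .and φ ψ => Sat t φ ∧ Sat t ψ
  | t, .next φ => Sat (t.drop 1) φ
  | t, .until_ φ ψ => ∃ i, Sat (t.drop i) ψ ∧ ∀ j < i, Sat (t.drop j) φ

/-- Answer-indexed family semantics of conventional LTL (sets of infinite traces). -/
def sem : LTL A → Bool → Set (Trace (Set A))
  | .top, true => omegaSet (Set A)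
  | .top, false => ∅
  | .atom a, true => {t | t.Inf ∧ a ∈ t.st0}
  | .atom a, false => {t | t.Inf ∧ a ∉ t.st0}
  | .neg φ, b => sem φ (!b)
  | .and φ ψ, true => sem φ true ∩ sem ψ true
  | .and φ ψ, false => sem φ false ∪ sem ψ false
  | .next φ, b => {t | t.drop 1 ∈ sem φ b}
  | .until_ φ ψ, true => {t | ∃ k, (∀ i < k, t.drop i ∈ sem φ true) ∧ t.drop k ∈ sem ψ true}
  | .until_ φ ψ, false => {t | ∀ k, (∃ i < k, t.drop i ∈ sem φ false) ∨ t.drop k ∈ sem ψ false}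

/-- Answer-indexed family semantics of LTL₃ (definitive sets of finite-or-infinite traces). -/
def sem3 : LTL A → Bool → Set (Trace (Set A))
  | .top, true => Set.univ
  | .top, false => ∅
  | .atom a, true => dp {t | t ≠ eps ∧ a ∈ t.st0}
  | .atom a, false => dp {t | t ≠ eps ∧ a ∉ t.st0}
  | .neg φ, b => sem3 φ (!b)
  | .and φ ψ, true => sem3 φ true ∩ sem3 ψ true
  | .and φ ψ, false => dUnion (sem3 φ false) (sem3 ψ false)
  | .next φ, b => prepend (sem3 φ b)
  | .until_ φ ψ, true =>
      dUnionI (fun k => (fun X => prepend X ∩ sem3 φ true)^[k] (sem3 ψ true))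
  | .until_ φ ψ, false =>
      ⋂ k, (fun X => dUnion (prepend X) (sem3 φ false))^[k] (sem3 ψ false)

end LTL


namespace Trace

variable {σ : Type}

/-- Constructor for finite traces. -/
def fin (l : List σ) : Trace σ := Sum.inl l

/-- Constructor for infinite traces. -/
def str (s : ℕ → σ) : Trace σ := Sum.inr s

lemma app_def (t u : Trace σ) : t ++ u = app t u := rfl

@[simp] lemma str_app (s : ℕ → σ) (u : Trace σ) : str s ++ u = str s := rfl

@[simp] lemma inf_str (s : ℕ → σ) : (str s).Inf := by simp [Inf, str, Sum.isRight]

lemma not_inf_fin (l : List σ) : ¬ (fin l).Inf := by simp [Inf, fin, Sum.isRight]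

lemma trace_cases (t : Trace σ) : (∃ l : List σ, t = fin l) ∨ (∃ s : ℕ → σ, t = str s) := by
  rcases t with l | s
  · exact Or.inl ⟨l, rfl⟩
  · exact Or.inr ⟨s, rfl⟩

lemma inf_app_eq {t : Trace σ} (h : t.Inf) (u : Trace σ) : t ++ u = t := by
  rcases trace_cases t with ⟨l, rfl⟩ | ⟨s, rfl⟩
  · exact absurd h (not_inf_fin l)
  · rfl

lemma fin_app_fin (l l' : List σ) : fin l ++ fin l' = fin (l ++ l') := rfl

lemma fin_app_str (l : List σ) (s : ℕ → σ) :
    fin l ++ str s = str (fun n => if h : n < l.length then l.get ⟨n, h⟩ else s (n - l.length)) := rfl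

@[simp] lemma app_eps (t : Trace σ) : t ++ (eps : Trace σ) = t := by
  rcases trace_cases t with ⟨l, rfl⟩ | ⟨s, rfl⟩
  · show fin l ++ fin [] = fin l
    rw [fin_app_fin, List.append_nil]
  · rfl

@[simp] lemma eps_app (u : Trace σ) : (eps : Trace σ) ++ u = u := by
  rcases trace_cases u with ⟨l, rfl⟩ | ⟨s, rfl⟩
  · show fin [] ++ fin l = fin l
    rw [fin_app_fin, List.nil_append]
  · show fin [] ++ str s = str s
    rw [fin_app_str]
    congr 1

lemma inf_app {u : Trace σ} (h : u.Inf) (t : Trace σ) : (t ++ u).Inf := by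
  rcases trace_cases u with ⟨l, rfl⟩ | ⟨s, rfl⟩
  · exact absurd h (not_inf_fin l)
  · rcases trace_cases t with ⟨l, rfl⟩ | ⟨s', rfl⟩
    · rw [fin_app_str]; simp
    · simp

lemma str_drop1 (s : ℕ → σ) : (str s).drop1 = str (fun n => s (n + 1)) := rfl

lemma inf_drop1 {t : Trace σ} (h : t.Inf) : t.drop1.Inf := by
  rcases trace_cases t with ⟨l, rfl⟩ | ⟨s, rfl⟩
  · exact absurd h (not_inf_fin l)
  · rw [str_drop1]; simp

lemma inf_drop {t : Trace σ} (h : t.Inf) (n : ℕ) : (t.drop n).Inf := by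
  induction n with
  | zero => exact h
  | succ n ih =>
    rw [drop, Function.iterate_succ_apply']
    exact inf_drop1 ih

lemma app_assoc (t u v : Trace σ) : t ++ u ++ v = t ++ (u ++ v) := by
  rcases trace_cases t with ⟨l, rfl⟩ | ⟨s, rfl⟩
  swap
  · rfl
  rcases trace_cases u with ⟨l', rfl⟩ | ⟨s, rfl⟩
  swap
  · rfl
  rcases trace_cases v with ⟨l'', rfl⟩ | ⟨s, rfl⟩
  · rw [fin_app_fin, fin_app_fin, fin_app_fin, fin_app_fin, List.append_assoc]
  · rw [fin_app_fin, fin_app_str, fin_app_str, fin_app_str]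
    congr 1
    funext n
    simp only [List.length_append, List.get_eq_getElem]
    rcases lt_or_ge n l.length with h | h
    · rw [dif_pos (by omega), dif_pos h, List.getElem_append_left h]
    · rcases lt_or_ge n (l.length + l'.length) with h2 | h2
      · rw [dif_pos (by omega), dif_neg (by omega), dif_pos (by omega),
          List.getElem_append_right (by omega)]
      · rw [dif_neg (by omega), dif_neg (by omega), dif_neg (by omega)]
        congr 1
        omega

lemma drop_zero (t : Trace σ) : t.drop 0 = t := rfl

lemma drop_one (t : Trace σ) : t.drop 1 = t.drop1 := by
  simp [drop]

lemma drop_succ (t : Trace σ) (n : ℕ) : t.drop (n + 1) = t.drop1.drop n :=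
  Function.iterate_succ_apply drop1 n t

lemma mem_dp_iff (t : Trace σ) (X : Set (Trace σ)) (u₀ : Trace σ) (hu₀ : u₀.Inf) :
    t ∈ dp X ↔ ∀ u : Trace σ, u.Inf → t ++ u ∈ X := by
  constructor
  · intro h u hu
    have hm : t ++ u ∈ ext t := ⟨u, rfl⟩
    have h2 := h hm
    rw [preS, Set.mem_iUnion₂] at h2
    obtain ⟨z, hz, w, hw⟩ := h2
    rw [inf_app_eq (inf_app hu t) w] at hw
    rwa [← hw]
  · intro h w hw
    obtain ⟨v, rfl⟩ := hw
    rw [preS, Set.mem_iUnion₂]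
    exact ⟨t ++ (v ++ u₀), h _ (inf_app hu₀ v), u₀, (app_assoc t v u₀).symm⟩

end Trace

namespace Trace

variable {σ : Type}

lemma mem_prepend {X : Set (Trace σ)} {t : Trace σ} : t ∈ prepend X ↔ t.drop 1 ∈ X := Iff.rfl

lemma ne_eps_of_inf {t : Trace σ} (h : t.Inf) : t ≠ eps := by
  rcases trace_cases t with ⟨l, rfl⟩ | ⟨s, rfl⟩
  · exact absurd h (not_inf_fin l)
  · intro he
    exact absurd (he ▸ h) (not_inf_fin [])

lemma forall_app_inf_iff (s₀ : σ) {P : Trace σ → Prop} {w : Trace σ} (hw : w.Inf) :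
    (∀ u : Trace σ, u.Inf → P (w ++ u)) ↔ P w := by
  constructor
  · intro h
    have := h (str fun _ => s₀) (inf_str _)
    rwa [inf_app_eq hw] at this
  · intro h u hu
    rwa [inf_app_eq hw]

lemma fin_nil_drop1 : (fin ([] : List σ)).drop1 = eps := rfl

lemma fin_cons_drop1 (a : σ) (l : List σ) : (fin (a :: l)).drop1 = fin l := rfl

lemma cons_app_drop1 (a : σ) (l : List σ) (u : Trace σ) :
    (fin (a :: l) ++ u).drop1 = fin l ++ u := by
  rcases trace_cases u with ⟨l', rfl⟩ | ⟨s, rfl⟩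
  · rw [fin_app_fin, fin_app_fin, List.cons_append, fin_cons_drop1]
  · rw [fin_app_str, fin_app_str, str_drop1]
    congr 1
    funext n
    simp only [List.length_cons, List.get_eq_getElem]
    rcases lt_or_ge n l.length with h | h
    · rw [dif_pos (by omega), dif_pos h]
      exact List.getElem_cons_succ a l n _
    · rw [dif_neg (by omega), dif_neg (by omega)]
      congr 1
      omega

lemma forall_drop1_app (t : Trace σ) (R : Trace σ → Prop) :
    (∀ u : Trace σ, u.Inf → R (t.drop1 ++ u)) ↔ (∀ u : Trace σ, u.Inf → R ((t ++ u).drop1)) := by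
  rcases trace_cases t with ⟨l, rfl⟩ | ⟨s, rfl⟩
  · cases l with
    | nil =>
      constructor
      · intro h u hu
        have := h u.drop1 (inf_drop1 hu)
        rw [fin_nil_drop1, eps_app] at this
        rwa [show (fin ([] : List σ)) = eps from rfl, eps_app]
      · intro h u hu
        rw [fin_nil_drop1, eps_app]
        rcases trace_cases u with ⟨l', rfl⟩ | ⟨s, rfl⟩
        · exact absurd hu (not_inf_fin l')
        · have := h (str fun n => s (n - 1)) (inf_str _)
          rw [show (fin ([] : List σ)) = eps from rfl, eps_app, str_drop1] at this
          convert this using 2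
          funext n; simp
    | cons a l =>
      constructor
      · intro h u hu
        rw [cons_app_drop1, ← fin_cons_drop1 a l]
        exact h u hu
      · intro h u hu
        have := h u hu
        rwa [cons_app_drop1, ← fin_cons_drop1 a l] at this
  · constructor
    · intro h u hu
      rw [inf_app_eq (inf_str s)]
      have := h u hu
      rwa [inf_app_eq (inf_drop1 (inf_str s))] at this
    · intro h u hu
      rw [inf_app_eq (inf_drop1 (inf_str s))]
      have := h u hu
      rwa [inf_app_eq (inf_str s)] at this

lemma mem_dUnion_iff (t : Trace σ) (X Y : Set (Trace σ)) (u₀ : Trace σ) (hu₀ : u₀.Inf) :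
    t ∈ dUnion X Y ↔ ∀ u : Trace σ, u.Inf → (t ++ u ∈ X ∨ t ++ u ∈ Y) := by
  rw [dUnion, mem_dp_iff _ _ u₀ hu₀]
  exact forall_congr' fun u => imp_congr_right fun hu => Set.mem_union _ _ _

end Trace

open Trace in
lemma sem3_aux {A : Type} (φ : LTL A) : ∀ t : Trace (Set A),
    (t ∈ LTL.sem3 φ true ↔ ∀ u : Trace (Set A), u.Inf → t ++ u ∈ LTL.sem φ true) ∧
    (t ∈ LTL.sem3 φ false ↔ ∀ u : Trace (Set A), u.Inf → t ++ u ∈ LTL.sem φ false) := by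
  let u₀ : Trace (Set A) := str fun _ => ∅
  have hu₀ : u₀.Inf := inf_str _
  induction φ with
  | top =>
    intro t
    constructor
    · exact iff_of_true (Set.mem_univ t) (fun u hu => inf_app hu t)
    · exact iff_of_false (Set.notMem_empty t) (fun h => h u₀ hu₀)
  | atom a =>
    intro t
    constructor
    · rw [show LTL.sem3 (.atom a) true = dp {t | t ≠ eps ∧ a ∈ t.st0} from rfl,
        mem_dp_iff _ _ u₀ hu₀]
      refine forall_congr' fun u => imp_congr_right fun hu => ?_
      show (t ++ u ≠ eps ∧ a ∈ (t ++ u).st0) ↔ ((t ++ u).Inf ∧ a ∈ (t ++ u).st0)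
      have hi := inf_app hu t
      simp [hi, ne_eps_of_inf hi]
    · rw [show LTL.sem3 (.atom a) false = dp {t | t ≠ eps ∧ a ∉ t.st0} from rfl,
        mem_dp_iff _ _ u₀ hu₀]
      refine forall_congr' fun u => imp_congr_right fun hu => ?_
      show (t ++ u ≠ eps ∧ a ∉ (t ++ u).st0) ↔ ((t ++ u).Inf ∧ a ∉ (t ++ u).st0)
      have hi := inf_app hu t
      simp [hi, ne_eps_of_inf hi]
  | neg φ ih =>
    intro t
    exact ⟨(ih t).2, (ih t).1⟩
  | and φ ψ ihφ ihψ =>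
    intro t
    constructor
    · show t ∈ LTL.sem3 φ true ∩ LTL.sem3 ψ true ↔ _
      rw [Set.mem_inter_iff, (ihφ t).1, (ihψ t).1]
      constructor
      · rintro ⟨h1, h2⟩ u hu
        exact ⟨h1 u hu, h2 u hu⟩
      · intro h
        exact ⟨fun u hu => (h u hu).1, fun u hu => (h u hu).2⟩
    · show t ∈ dp (LTL.sem3 φ false ∪ LTL.sem3 ψ false) ↔ _
      rw [mem_dp_iff _ _ u₀ hu₀]
      refine forall_congr' fun u => imp_congr_right fun hu => ?_
      have hi := inf_app hu t
      show t ++ u ∈ LTL.sem3 φ false ∨ t ++ u ∈ LTL.sem3 ψ false ↔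
        t ++ u ∈ LTL.sem φ false ∨ t ++ u ∈ LTL.sem ψ false
      rw [(ihφ (t ++ u)).2, (ihψ (t ++ u)).2,
        forall_app_inf_iff ∅ hi, forall_app_inf_iff ∅ hi]
  | next φ ih =>
    intro t
    have key : ∀ b : Bool, (t.drop 1 ∈ LTL.sem3 φ b ↔
        ∀ u : Trace (Set A), u.Inf → (t ++ u).drop 1 ∈ LTL.sem φ b) := by
      intro b
      have hb : ∀ s : Trace (Set A),
          (s ∈ LTL.sem3 φ b ↔ ∀ u : Trace (Set A), u.Inf → s ++ u ∈ LTL.sem φ b) := by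
        cases b
        · exact fun s => (ih s).2
        · exact fun s => (ih s).1
      rw [drop_one, hb t.drop1]
      simp only [drop_one]
      exact forall_drop1_app t (fun w => w ∈ LTL.sem φ b)
    exact ⟨key true, key false⟩
  | until_ φ ψ ihφ ihψ =>
    have hφT : ∀ {w : Trace (Set A)}, w.Inf → (w ∈ LTL.sem3 φ true ↔ w ∈ LTL.sem φ true) :=
      fun {w} hw => (ihφ w).1.trans (forall_app_inf_iff ∅ hw)
    have hφF : ∀ {w : Trace (Set A)}, w.Inf → (w ∈ LTL.sem3 φ false ↔ w ∈ LTL.sem φ false) :=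
      fun {w} hw => (ihφ w).2.trans (forall_app_inf_iff ∅ hw)
    have hψT : ∀ {w : Trace (Set A)}, w.Inf → (w ∈ LTL.sem3 ψ true ↔ w ∈ LTL.sem ψ true) :=
      fun {w} hw => (ihψ w).1.trans (forall_app_inf_iff ∅ hw)
    intro t
    constructor
    · -- true case
      have hF : ∀ (k : ℕ) (w : Trace (Set A)), w.Inf →
          (w ∈ (fun X => prepend X ∩ LTL.sem3 φ true)^[k] (LTL.sem3 ψ true) ↔
            ((∀ i < k, w.drop i ∈ LTL.sem φ true) ∧ w.drop k ∈ LTL.sem ψ true)) := by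
        intro k
        induction k with
        | zero =>
          intro w hw
          rw [Function.iterate_zero_apply]
          simp only [Nat.not_lt_zero, false_implies, implies_true, true_and, drop_zero]
          exact hψT hw
        | succ k hk =>
          intro w hw
          rw [Function.iterate_succ_apply']
          simp only [Set.mem_inter_iff, mem_prepend]
          rw [drop_one, hk w.drop1 (inf_drop1 hw), hφT hw]
          constructor
          · rintro ⟨⟨h1, h2⟩, h3⟩
            refine ⟨?_, by rwa [drop_succ]⟩
            intro i hi
            match i with
            | 0 => exact h3
            | i + 1 => rw [drop_succ]; exact h1 i (by omega)
          · rintro ⟨h1, h2⟩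
            exact ⟨⟨fun i hi => by rw [← drop_succ]; exact h1 (i + 1) (by omega),
              by rwa [← drop_succ]⟩, h1 0 (by omega)⟩
      show t ∈ dp _ ↔ _
      rw [mem_dp_iff _ _ u₀ hu₀]
      refine forall_congr' fun u => imp_congr_right fun hu => ?_
      have hi := inf_app hu t
      rw [Set.mem_iUnion]
      exact exists_congr fun k => hF k (t ++ u) hi
    · -- false case
      have hG : ∀ (k : ℕ) (t : Trace (Set A)),
          (t ∈ (fun X => dUnion (prepend X) (LTL.sem3 φ false))^[k] (LTL.sem3 ψ false) ↔
            ∀ u : Trace (Set A), u.Inf →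
              ((∃ i < k, (t ++ u).drop i ∈ LTL.sem φ false) ∨
                (t ++ u).drop k ∈ LTL.sem ψ false)) := by
        intro k
        induction k with
        | zero =>
          intro t
          rw [Function.iterate_zero_apply, (ihψ t).2]
          refine forall_congr' fun u => imp_congr_right fun hu => ?_
          simp [drop_zero]
        | succ k hk =>
          intro t
          simp only [Function.iterate_succ_apply']
          rw [mem_dUnion_iff _ _ _ u₀ hu₀]
          refine forall_congr' fun u => imp_congr_right fun hu => ?_
          have hi := inf_app hu t
          simp only [mem_prepend]
          rw [drop_one, hk (t ++ u).drop1,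
            forall_app_inf_iff (∅ : Set A) (inf_drop1 hi)
              (P := fun w => (∃ i < k, w.drop i ∈ LTL.sem φ false) ∨ w.drop k ∈ LTL.sem ψ false),
            hφF hi]
          constructor
          · rintro (⟨⟨i, hik, hm⟩ | hm⟩ | hm)
            · exact Or.inl ⟨i + 1, by omega, by rwa [drop_succ]⟩
            · exact Or.inr (by rwa [drop_succ])
            · exact Or.inl ⟨0, by omega, by rwa [drop_zero]⟩
          · rintro (⟨i, hik, hm⟩ | hm)
            · match i with
              | 0 => exact Or.inr (by rwa [drop_zero] at hm)
              | i + 1 => exact Or.inl (Or.inl ⟨i, by omega, by rwa [← drop_succ]⟩)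
            · exact Or.inl (Or.inr (by rwa [← drop_succ]))
      show t ∈ ⋂ k, _ ↔ _
      rw [Set.mem_iInter]
      constructor
      · intro h u hu k
        exact ((hG k t).mp (h k)) u hu
      · intro h k
        exact (hG k t).mpr fun u hu => h u hu k


theorem sem3_eq_noninductive {A : Type} (φ : LTL A) (t : Trace (Set A))
    (ht : ¬ t.Inf) :
    (t ∈ LTL.sem3 φ true ↔ ∀ u : Trace (Set A), u.Inf → t ++ u ∈ LTL.sem φ true) ∧
    (t ∈ LTL.sem3 φ false ↔ ∀ u : Trace (Set A), u.Inf → t ++ u ∈ LTL.sem φ false) := sem3_aux φ t
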